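/- arXiv:1605.08010 — 2 statements merged into one kernel-verified Lean document; each statement's English description precedes it below -/
import Mathlib

section
/- Let (c_n) be a nonnegative real sequence satisfying c_n ≤ (1 - p/n) c_{n-1} + D/n² for all n > N, where p > 1, D ≥ 0, and N ≥ p is an integer. Then c_n = O(1/n), i.e. there exists C such that c_n ≤ C/n for all n ≥ 1. -/
lemma recursion_key (p D C x : ℝ) (hp : 1 < p) (hx : p + 1 ≤ x)
    (hC : D ≤ C * (p - 1)) (hC0 : 0 ≤ C) (hD : 0 ≤ D) :
    (1 - p / x) * (C / (x - 1)) + D / x ^ 2 ≤ C / x := by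
  have hx0 : 0 < x := by linarith
  have hx1 : 0 < x - 1 := by linarith
  have e : (1 - p / x) * (C / (x - 1)) + D / x ^ 2
      = ((x - p) * C * x + D * (x - 1)) / (x ^ 2 * (x - 1)) := by
    field_simp
  have e2 : C / x = (C * x * (x - 1)) / (x ^ 2 * (x - 1)) := by
    field_simp
  rw [e, e2]
  apply div_le_div_of_nonneg_right ?_ (by positivity)
  nlinarith [mul_nonneg hC0 hx1.le]

theorem recursion_bound (c : ℕ → ℝ) (p D : ℝ) (N : ℕ)
    (hc : ∀ n, 0 ≤ c n) (hp : 1 < p) (hD : 0 ≤ D) (hN : p ≤ (N : ℝ))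
    (hrec : ∀ n > N, c n ≤ (1 - p / (n : ℝ)) * c (n - 1) + D / (n : ℝ) ^ 2) :
    ∃ C : ℝ, ∀ n ≥ 1, c n ≤ C / (n : ℝ) := by
  set C : ℝ := D / (p - 1) + ∑ k ∈ Finset.Icc 1 N, (k : ℝ) * c k with hCdef
  clear_value C
  have hsum_nonneg : 0 ≤ ∑ k ∈ Finset.Icc 1 N, (k : ℝ) * c k :=
    Finset.sum_nonneg fun k _ => mul_nonneg (by positivity) (hc k)
  have hC0 : 0 ≤ C := by
    have : 0 ≤ D / (p - 1) := div_nonneg hD (by linarith)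
    linarith
  have hCD : D ≤ C * (p - 1) := by
    have h1 : D / (p - 1) * (p - 1) = D := div_mul_cancel₀ D (by linarith)
    have h2 : 0 ≤ (∑ k ∈ Finset.Icc 1 N, (k : ℝ) * c k) * (p - 1) :=
      mul_nonneg hsum_nonneg (by linarith)
    calc D = D / (p - 1) * (p - 1) := h1.symm
      _ ≤ C * (p - 1) := by rw [hCdef]; nlinarith [hCdef.ge]
  refine ⟨C, ?_⟩
  intro n
  induction n using Nat.strong_induction_on with
  | _ n ih =>
    intro hn1
    by_cases hle : n ≤ N
    · -- base case: 1 ≤ n ≤ N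
      have hmem : n ∈ Finset.Icc 1 N := Finset.mem_Icc.mpr ⟨hn1, hle⟩
      have hterm : (n : ℝ) * c n ≤ ∑ k ∈ Finset.Icc 1 N, (k : ℝ) * c k :=
        Finset.single_le_sum (fun k _ => mul_nonneg (by positivity) (hc k)) hmem
      have hnpos : (0 : ℝ) < n := by exact_mod_cast hn1
      rw [le_div_iff₀ hnpos]
      have : 0 ≤ D / (p - 1) := div_nonneg hD (by linarith)
      nlinarith [hCdef.ge]
    · -- inductive step: n > N
      push_neg at hle
      have hN1 : 1 ≤ N := by
        by_contra h
        push_neg at h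
        interval_cases N
        simp at hN; linarith
      have hprev : c (n - 1) ≤ C / ((n : ℝ) - 1) := by
        have h1 : n - 1 < n := Nat.sub_lt (by omega) one_pos
        have h2 : 1 ≤ n - 1 := by omega
        have := ih (n - 1) h1 h2
        have hcast : ((n - 1 : ℕ) : ℝ) = (n : ℝ) - 1 := by
          rw [Nat.cast_sub (by omega)]; simp
        rwa [hcast] at this
      have hx : p + 1 ≤ (n : ℝ) := by
        have : (N : ℝ) + 1 ≤ (n : ℝ) := by exact_mod_cast Nat.succ_le_of_lt hle
        linarith
      have hcoef : 0 ≤ 1 - p / (n : ℝ) := by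
        have hn0 : (0 : ℝ) < n := by linarith
        rw [sub_nonneg, div_le_one hn0]; linarith
      calc c n ≤ (1 - p / (n : ℝ)) * c (n - 1) + D / (n : ℝ) ^ 2 := hrec n hle
        _ ≤ (1 - p / (n : ℝ)) * (C / ((n : ℝ) - 1)) + D / (n : ℝ) ^ 2 := by
            gcongr
        _ ≤ C / (n : ℝ) := recursion_key p D C (n : ℝ) hp hx hCD hC0 hD
end

section
/- Let (Δ_n) be a sequence of ℝ^d-valued integrable random vectors adapted to a filtration (F_n), with E[‖Δ_n‖² | F_{n-1}] ≤ ‖Δ_{n-1}‖² + cβ²/n² (1 + ‖Δ_{n-1}‖²) for all n ≥ 1 and constants c, β > 0. Then ‖Δ_n‖² converges almost surely to a finite limit. -/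
open MeasureTheory Filter
open scoped ENNReal NNReal

theorem norm_sq_converges {Ω : Type*} {m0 : MeasurableSpace Ω}
    {μ : Measure Ω} [IsProbabilityMeasure μ] {d : ℕ}
    (ℱ : Filtration ℕ m0) (Δ : ℕ → Ω → EuclideanSpace ℝ (Fin d))
    (c β : ℝ) (hc : 0 < c) (hβ : 0 < β)
    (hadapted : Adapted ℱ Δ)
    (hint : ∀ n, Integrable (fun ω => ‖Δ n ω‖ ^ 2) μ)
    (hrec : ∀ n ≥ 1, ∀ᵐ ω ∂μ,
      (μ[fun ω => ‖Δ n ω‖ ^ 2 | ℱ (n - 1)]) ω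
        ≤ ‖Δ (n - 1) ω‖ ^ 2 + c * β ^ 2 / (n : ℝ) ^ 2 * (1 + ‖Δ (n - 1) ω‖ ^ 2)) :
    ∀ᵐ ω ∂μ, ∃ l : ℝ, Tendsto (fun n => ‖Δ n ω‖ ^ 2) atTop (nhds l) := by
  classical
  -- the multipliers
  set g : ℕ → ℝ := fun k => c * β ^ 2 / (k : ℝ) ^ 2 with hg_def
  have hg_nonneg : ∀ k, 0 ≤ g k := fun k => by
    apply div_nonneg (by positivity) (by positivity)
  have hg_summable : Summable g := by
    have h1 : Summable (fun k : ℕ => 1 / (k : ℝ) ^ 2) :=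
      Real.summable_one_div_nat_pow.2 (by norm_num)
    have := h1.mul_left (c * β ^ 2)
    refine this.congr fun k => ?_
    simp only [hg_def]
    ring
  -- the normalizing products
  set a : ℕ → ℝ := fun n => ∏ k ∈ Finset.Icc 1 n, (1 + g k) with ha_def
  have ha_pos : ∀ n, 0 < a n := fun n =>
    Finset.prod_pos fun k _ => by linarith [hg_nonneg k]
  have ha_one_le : ∀ n, 1 ≤ a n := by
    intro n
    simp only [ha_def]
    have h1 : (1:ℝ) = ∏ _k ∈ Finset.Icc 1 n, (1:ℝ) := by simp
    rw [h1]
    apply Finset.prod_le_prod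
    · intro k _; norm_num
    · intro k _; linarith [hg_nonneg k]
  have ha_succ : ∀ n, a (n + 1) = a n * (1 + g (n + 1)) := fun n => by
    rw [ha_def]
    exact Finset.prod_Icc_succ_top (Nat.le_add_left 1 n) _
  have ha_mono : Monotone a := by
    apply monotone_nat_of_le_succ
    intro n
    rw [ha_succ n]
    nlinarith [ha_pos n, hg_nonneg (n + 1)]
  have ha_bdd : ∀ n, a n ≤ Real.exp (∑' k, g k) := by
    intro n
    calc a n ≤ ∏ k ∈ Finset.Icc 1 n, Real.exp (g k) := by
          apply Finset.prod_le_prod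
          · intro k _; linarith [hg_nonneg k]
          · intro k _
            have := Real.add_one_le_exp (g k)
            linarith
      _ = Real.exp (∑ k ∈ Finset.Icc 1 n, g k) := (Real.exp_sum _ _).symm
      _ ≤ Real.exp (∑' k, g k) := by
          apply Real.exp_le_exp.2
          exact Summable.sum_le_tsum _ (fun k _ => hg_nonneg k) hg_summable
  -- a converges to a positive limit
  obtain ⟨L, hL⟩ : ∃ L, Tendsto a atTop (nhds L) := by
    refine ⟨⨆ n, a n, tendsto_atTop_ciSup ha_mono ⟨Real.exp (∑' k, g k), ?_⟩⟩
    rintro x ⟨n, rfl⟩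
    exact ha_bdd n
  have hL_pos : 0 < L := lt_of_lt_of_le one_pos (ge_of_tendsto' hL fun n => ha_one_le n)
  -- the supermartingale
  set Z : ℕ → Ω → ℝ := fun n ω => (a n)⁻¹ * (1 + ‖Δ n ω‖ ^ 2) with hZ_def
  have hZ_nonneg : ∀ n ω, 0 ≤ Z n ω := fun n ω => by
    have h := ha_pos n
    simp only [hZ_def]
    positivity
  have hsm : ∀ n, StronglyMeasurable[ℱ n] (fun ω => ‖Δ n ω‖ ^ 2) := fun n => by
    exact (((continuous_norm.pow 2).measurable).comp (hadapted n)).stronglyMeasurable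
  have hZ_adapted : StronglyAdapted ℱ Z := by
    intro n
    exact (stronglyMeasurable_const.add (hsm n)).const_mul _
  have hZ_int : ∀ n, Integrable (Z n) μ := by
    intro n
    exact (((integrable_const (1:ℝ)).add (hint n)).const_mul _)
  have hZ_cond : ∀ n, μ[Z (n + 1) | ℱ n] ≤ᵐ[μ] Z n := by
    intro n
    have hF_int : Integrable (fun ω => 1 + ‖Δ (n+1) ω‖ ^ 2) μ :=
      (integrable_const (1:ℝ)).add (hint (n+1))
    have h1 : μ[Z (n + 1) | ℱ n]
        =ᵐ[μ] (a (n+1))⁻¹ • μ[(fun ω => 1 + ‖Δ (n+1) ω‖ ^ 2) | ℱ n] := by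
      have : Z (n+1) = (a (n+1))⁻¹ • ((fun ω => 1 + ‖Δ (n+1) ω‖ ^ 2) : Ω → ℝ) := by
        funext ω; simp [hZ_def, smul_eq_mul]
      rw [this]
      exact condExp_smul _ _ _
    have h2 : μ[(fun ω => 1 + ‖Δ (n+1) ω‖ ^ 2) | ℱ n]
        =ᵐ[μ] (fun ω => 1 + (μ[(fun ω => ‖Δ (n+1) ω‖ ^ 2) | ℱ n]) ω) := by
      have := condExp_add (m := ℱ n) (μ := μ) (integrable_const (1:ℝ)) (hint (n+1))
      refine this.trans ?_
      have hconst : μ[(fun _ : Ω => (1:ℝ)) | ℱ n] = fun _ => (1:ℝ) :=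
        condExp_const (ℱ.le n) 1
      rw [hconst]
      rfl
    have h3 := hrec (n+1) (Nat.le_add_left 1 n)
    simp only [Nat.add_sub_cancel] at h3
    filter_upwards [h1, h2, h3] with ω hω1 hω2 hω3
    have hinv_pos : (0:ℝ) < (a (n+1))⁻¹ := by positivity
    calc (μ[Z (n + 1) | ℱ n]) ω
        = (a (n+1))⁻¹ * (1 + (μ[(fun ω => ‖Δ (n+1) ω‖ ^ 2) | ℱ n]) ω) := by
          simp only [hω1, Pi.smul_apply, smul_eq_mul, hω2]
      _ ≤ (a (n+1))⁻¹ * (1 + (‖Δ n ω‖ ^ 2 + c * β ^ 2 / ((n:ℝ)+1) ^ 2 * (1 + ‖Δ n ω‖ ^ 2))) := by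
          apply mul_le_mul_of_nonneg_left _ hinv_pos.le
          push_cast at hω3
          linarith [hω3]
      _ = Z n ω := by
          have hfac : a (n+1) = a n * (1 + g (n+1)) := ha_succ n
          have hg1 : g (n+1) = c * β ^ 2 / ((n:ℝ)+1) ^ 2 := by
            simp only [hg_def]; push_cast; ring
          have hn1 : ((n:ℝ)+1) ^ 2 ≠ 0 := by positivity
          have han := (ha_pos n).ne'
          simp only [hZ_def]
          rw [hfac, hg1]
          field_simp
          ring
  have hZ_super : Supermartingale Z ℱ μ := supermartingale_nat hZ_adapted hZ_int hZ_cond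
  -- L¹ boundedness
  set R : ℝ≥0∞ := ENNReal.ofReal (∫ ω, Z 0 ω ∂μ) with hR_def
  have hbdd : ∀ n, eLpNorm ((-Z) n) 1 μ ≤ R := by
    intro n
    have hnorm : eLpNorm ((-Z) n) 1 μ = eLpNorm (Z n) 1 μ := by
      simp [eLpNorm_neg]
    rw [hnorm, eLpNorm_one_eq_lintegral_enorm]
    have heq : ∫⁻ ω, ‖Z n ω‖ₑ ∂μ = ∫⁻ ω, ENNReal.ofReal (Z n ω) ∂μ := by
      apply lintegral_congr fun ω => Real.enorm_eq_ofReal (hZ_nonneg n ω)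
    rw [heq, ← ofReal_integral_eq_lintegral_ofReal (hZ_int n)
      (Eventually.of_forall (hZ_nonneg n))]
    apply ENNReal.ofReal_le_ofReal
    have := hZ_super.setIntegral_le (Nat.zero_le n) (MeasurableSet.univ)
    simpa [setIntegral_univ] using this
  have hconv := (hZ_super.neg).exists_ae_tendsto_of_bdd hbdd
  filter_upwards [hconv] with ω hω
  obtain ⟨l, hl⟩ := hω
  refine ⟨(-l) * L - 1, ?_⟩
  have hZl : Tendsto (fun n => Z n ω) atTop (nhds (-l)) := by
    have := hl.neg
    simpa using this
  have := (hZl.mul hL).sub_const 1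
  refine this.congr fun n => ?_
  have han := (ha_pos n).ne'
  show Z n ω * a n - 1 = ‖Δ n ω‖ ^ 2
  simp only [hZ_def]
  field_simp
  ring
end
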